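/- arXiv:1612.01174 — 3 statements merged into one kernel-verified Lean document; each statement's English description precedes it below -/
import Mathlib

section
/- Let α > 0 be real and G : ℝ → ℝ any function. If the sequence (x_n)_{n≥0} satisfies x_n = ∑_{k=0}^{n-1} (n-k)^{α-1} G(x_k) for all n ≥ 1 (with x_0 given), then for all n ≥ 1 it satisfies the fractional difference equation ∑_{k=0}^{n} (-1)^k C(α,k) x_{n-k} = (-1)^n C(α,n) x_0 + ∑_{k=0}^{n-1} G(x_{n-k-1}) A(α-1, k). -/
noncomputable def genBinom (α : ℝ) (n : ℕ) : ℝ :=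
  (∏ k ∈ Finset.range n, (α - k)) / (n.factorial : ℝ)

noncomputable def eulerA (α : ℝ) (k : ℕ) : ℝ :=
  ∑ j ∈ Finset.range (k + 1),
    (-1 : ℝ) ^ j * genBinom (α + 1) j * (((k + 1 - j : ℕ) : ℝ)) ^ α

theorem memory_map_implies_frac_diff (α : ℝ) (hα : 0 < α) (G : ℝ → ℝ) (x : ℕ → ℝ)
    (hx : ∀ n : ℕ, 1 ≤ n → x n = ∑ k ∈ Finset.range n, ((n - k : ℕ) : ℝ) ^ (α - 1) * G (x k)) :
    ∀ n : ℕ, 1 ≤ n →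
      ∑ k ∈ Finset.range (n + 1), (-1 : ℝ) ^ k * genBinom α k * x (n - k)
        = (-1 : ℝ) ^ n * genBinom α n * x 0
          + ∑ k ∈ Finset.range n, G (x (n - k - 1)) * eulerA (α - 1) k := by
  intro n hn
  rw [Finset.sum_range_succ, Nat.sub_self]
  have h1 : ∀ k ∈ Finset.range n, (-1:ℝ)^k * genBinom α k * x (n-k)
      = ∑ j ∈ Finset.range (n-k),
          (-1:ℝ)^k * genBinom α k * (((n-k-j:ℕ):ℝ)^(α-1) * G (x j)) := by
    intro k hk
    rw [hx (n-k) (by simp at hk; omega), Finset.mul_sum]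
  rw [Finset.sum_congr rfl h1, add_comm]
  congr 1
  simp only [eulerA, sub_add_cancel, Finset.mul_sum]
  rw [Finset.sum_sigma', Finset.sum_sigma']
  refine Finset.sum_nbij' (fun p => ⟨n - p.2 - 1, p.1⟩) (fun p => ⟨p.2, n - p.1 - 1⟩)
    ?_ ?_ ?_ ?_ ?_
  · rintro ⟨a, b⟩ h
    simp only [Finset.mem_sigma, Finset.mem_range] at h ⊢
    omega
  · rintro ⟨k, j⟩ h
    simp only [Finset.mem_sigma, Finset.mem_range] at h ⊢
    omega
  · rintro ⟨a, b⟩ h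
    simp only [Finset.mem_sigma, Finset.mem_range] at h
    simp only [Sigma.mk.inj_iff, heq_eq_eq, true_and, and_true]
    omega
  · rintro ⟨k, j⟩ h
    simp only [Finset.mem_sigma, Finset.mem_range] at h
    simp only [Sigma.mk.inj_iff, heq_eq_eq, true_and, and_true]
    omega
  · rintro ⟨a, b⟩ h
    simp only [Finset.mem_sigma, Finset.mem_range] at h
    have h2 : n - (n - b - 1) - 1 = b := by omega
    have h3 : n - b - 1 + 1 - a = n - a - b := by omega
    rw [h2, h3]
    ring
end

section
/- Conversely, let α > 0 be real and G : ℝ → ℝ any function. If a sequence (x_n)_{n≥0} satisfies ∑_{k=0}^{n} (-1)^k C(α,k) x_{n-k} = (-1)^n C(α,n) x_0 + ∑_{k=0}^{n-1} G(x_{n-k-1}) A(α-1, k) for all n ≥ 1, then x_n = ∑_{k=0}^{n-1} (n-k)^{α-1} G(x_k) for all n ≥ 1. -/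
open Finset

lemma tri_swap (n : ℕ) (f : ℕ → ℕ → ℝ) :
    ∑ k ∈ range n, ∑ j ∈ range (n - k), f k j
      = ∑ j ∈ range n, ∑ k ∈ range (n - j), f k j := by
  rw [← Finset.sum_range_diag_flip n f, ← Finset.sum_range_diag_flip n (fun j k => f k j)]
  refine Finset.sum_congr rfl fun m _ => ?_
  rw [← Finset.sum_range_reflect (fun k => f k (m - k)) (m + 1)]
  refine Finset.sum_congr rfl fun k hk => ?_
  simp only [mem_range, Nat.lt_succ_iff] at hk
  congr 1 <;> omega

-- key identity: the memory-map sum satisfies the fractional difference equation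
lemma key_identity (α : ℝ) (G : ℝ → ℝ) (x : ℕ → ℝ) (n : ℕ) :
    ∑ k ∈ range (n + 1), (-1 : ℝ) ^ k * genBinom α k *
        (∑ j ∈ range (n - k), ((n - k - j : ℕ) : ℝ) ^ (α - 1) * G (x j))
      = ∑ k ∈ range n, G (x (n - k - 1)) * eulerA (α - 1) k := by
  -- drop the k = n term (inner sum empty)
  rw [Finset.sum_range_succ]
  simp only [Nat.sub_self, Finset.range_zero, Finset.sum_empty, mul_zero, add_zero]
  -- expand LHS and swap
  simp only [Finset.mul_sum]
  calc ∑ k ∈ range n, ∑ j ∈ range (n - k),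
          (-1 : ℝ) ^ k * genBinom α k * (((n - k - j : ℕ) : ℝ) ^ (α - 1) * G (x j))
      = ∑ j ∈ range n, ∑ k ∈ range (n - j),
          (-1 : ℝ) ^ k * genBinom α k * (((n - k - j : ℕ) : ℝ) ^ (α - 1) * G (x j)) := by
        rw [tri_swap]
    _ = ∑ k ∈ range n, G (x (n - k - 1)) * eulerA (α - 1) k := by
        rw [← Finset.sum_range_reflect (fun k => G (x (n - k - 1)) * eulerA (α - 1) k) n]
        refine Finset.sum_congr rfl fun j hj => ?_
        simp only [mem_range] at hj
        have h1 : n - (n - 1 - j) - 1 = j := by omega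
        have h2 : n - 1 - j + 1 = n - j := by omega
        rw [h1, eulerA, Finset.mul_sum]
        refine Finset.sum_congr (by rw [h2]) fun k hk => ?_
        simp only [mem_range, h2] at hk
        have h3 : α - 1 + 1 = α := by ring
        have h4 : n - k - j = n - j - k := by omega
        rw [h3, h2, h4]
        ring

theorem frac_diff_implies_memory_map (α : ℝ) (hα : 0 < α) (G : ℝ → ℝ) (x : ℕ → ℝ)
    (hx : ∀ n : ℕ, 1 ≤ n →
      ∑ k ∈ Finset.range (n + 1), (-1 : ℝ) ^ k * genBinom α k * x (n - k)
        = (-1 : ℝ) ^ n * genBinom α n * x 0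
          + ∑ k ∈ Finset.range n, G (x (n - k - 1)) * eulerA (α - 1) k) :
    ∀ n : ℕ, 1 ≤ n →
      x n = ∑ k ∈ Finset.range n, ((n - k : ℕ) : ℝ) ^ (α - 1) * G (x k) := by
  intro n
  induction n using Nat.strong_induction_on with
  | _ n ih =>
    intro hn
    obtain ⟨m, rfl⟩ : ∃ m, n = m + 1 := ⟨n - 1, by omega⟩
    have key := key_identity α G x (m + 1)
    have h := hx (m + 1) (by omega)
    -- peel off first term (k = 0) of both big sums
    rw [Finset.sum_range_succ'] at h key
    simp only [pow_zero, one_mul, Nat.sub_zero] at h key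
    have hg0 : genBinom α 0 = 1 := by simp [genBinom]
    rw [hg0, one_mul] at h key
    -- peel off the last term (k = m) of the remaining sums
    rw [Finset.sum_range_succ] at h key
    have hsub : m + 1 - (m + 1) = 0 := by omega
    rw [hsub] at h key
    simp only [Finset.range_zero, Finset.sum_empty, Finset.sum_empty, mul_zero, add_zero] at key
    -- rewrite earlier x values via induction hypothesis
    have hrw : ∑ k ∈ range m, (-1 : ℝ) ^ (k + 1) * genBinom α (k + 1) * x (m + 1 - (k + 1))
        = ∑ k ∈ range m, (-1 : ℝ) ^ (k + 1) * genBinom α (k + 1) *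
            (∑ j ∈ range (m + 1 - (k + 1)), ((m + 1 - (k + 1) - j : ℕ) : ℝ) ^ (α - 1) * G (x j)) := by
      refine Finset.sum_congr rfl fun k hk => ?_
      simp only [mem_range] at hk
      rw [ih (m + 1 - (k + 1)) (by omega) (by omega)]
    rw [hrw] at h
    linarith [h, key]
end

section
/- Riemann sum convergence of the memory map to the fractional integral: let α > 0, G : ℝ → ℝ continuous, and x : [a, t] → ℝ continuous. Then as h → 0+ with nh = t - a fixed, (h^α/Γ(α)) ∑_{k=0}^{n-1} (n-k)^{α-1} G(x(a + kh)) converges to (1/Γ(α)) ∫_a^t (t-τ)^{α-1} G(x(τ)) dτ. -/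
open Filter MeasureTheory Set

noncomputable section MMaux

/-- mesh -/
private def mmh (a t : ℝ) (n : ℕ) : ℝ := (t - a) / n

/-- partition points -/
private def mmp (a t : ℝ) (n k : ℕ) : ℝ := a + k * mmh a t n

/-- index of the subinterval containing τ -/
private def mmK (a t : ℝ) (n : ℕ) (τ : ℝ) : ℕ := ⌊(τ - a) / mmh a t n⌋₊

/-- left endpoint of the subinterval containing τ -/
private def mmq (a t : ℝ) (n : ℕ) (τ : ℝ) : ℝ := mmp a t n (mmK a t n τ)

/-- step function -/
private def mmF (α a t : ℝ) (G x : ℝ → ℝ) (n : ℕ) (τ : ℝ) : ℝ :=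
  (t - mmq a t n τ) ^ (α - 1) * G (x (mmq a t n τ))

variable {a t : ℝ}

private lemma mmh_pos (hat : a < t) {n : ℕ} (hn : 0 < n) : 0 < mmh a t n :=
  div_pos (sub_pos.2 hat) (by exact_mod_cast hn)

private lemma mmh_nonneg (hat : a < t) (n : ℕ) : 0 ≤ mmh a t n :=
  div_nonneg (sub_pos.2 hat).le (Nat.cast_nonneg n)

private lemma mmp_zero (n : ℕ) : mmp a t n 0 = a := by simp [mmp]

private lemma mmp_last (hat : a < t) {n : ℕ} (hn : 0 < n) : mmp a t n n = t := by
  have : (n : ℝ) ≠ 0 := by exact_mod_cast hn.ne'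
  unfold mmp mmh; field_simp; ring

private lemma mmp_mono (hat : a < t) (n : ℕ) {k l : ℕ} (hkl : k ≤ l) :
    mmp a t n k ≤ mmp a t n l := by
  have : (k : ℝ) ≤ l := by exact_mod_cast hkl
  have := mmh_nonneg hat (a := a) (t := t) n
  unfold mmp
  nlinarith

private lemma mma_le_mmq (hat : a < t) (n : ℕ) (τ : ℝ) : a ≤ mmq a t n τ := by
  have h1 : (0:ℝ) ≤ (mmK a t n τ : ℝ) := Nat.cast_nonneg _
  have h2 := mmh_nonneg hat (a := a) (t := t) n
  unfold mmq mmp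
  nlinarith

private lemma mmq_le (hat : a < t) (n : ℕ) {τ : ℝ} (hτ : a ≤ τ) : mmq a t n τ ≤ τ := by
  rcases Nat.eq_zero_or_pos n with rfl | hn
  · simp [mmq, mmp, mmh, hτ]
  · have hh := mmh_pos hat hn
    have h0 : 0 ≤ (τ - a) / mmh a t n := div_nonneg (by linarith) hh.le
    have := Nat.floor_le h0
    have h2 : (mmK a t n τ : ℝ) * mmh a t n ≤ τ - a := by
      rw [← le_div_iff₀ hh]; exact this
    unfold mmq mmp
    linarith

private lemma mmK_eq (hat : a < t) {n k : ℕ} (hn : 0 < n) {τ : ℝ}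
    (h1 : mmp a t n k ≤ τ) (h2 : τ < mmp a t n (k + 1)) : mmK a t n τ = k := by
  have hh := mmh_pos hat hn
  have hk : (k : ℝ) ≤ (τ - a) / mmh a t n := by
    rw [le_div_iff₀ hh]
    unfold mmp at h1; linarith
  have hk' : (τ - a) / mmh a t n < (k : ℝ) + 1 := by
    rw [div_lt_iff₀ hh]
    unfold mmp at h2; push_cast at h2 ⊢; nlinarith
  have h0 : 0 ≤ (τ - a) / mmh a t n := le_trans (Nat.cast_nonneg k) hk
  exact (Nat.floor_eq_iff h0).mpr ⟨hk, hk'⟩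


private lemma mmIco_cover (hat : a < t) {n : ℕ} (hn : 0 < n) :
    Set.Ico a t = ⋃ k ∈ Finset.range n, Set.Ico (mmp a t n k) (mmp a t n (k + 1)) := by
  ext τ
  simp only [Set.mem_iUnion, Finset.mem_range, Set.mem_Ico, exists_prop]
  constructor
  · rintro ⟨h1, h2⟩
    have hh := mmh_pos hat hn
    have h0 : 0 ≤ (τ - a) / mmh a t n := div_nonneg (by linarith) hh.le
    refine ⟨mmK a t n τ, ?_, mmq_le hat n h1, ?_⟩
    · rw [mmK, Nat.floor_lt h0, div_lt_iff₀ hh]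
      have hmul : (n : ℝ) * mmh a t n = t - a := by
        have : (n : ℝ) ≠ 0 := by exact_mod_cast hn.ne'
        unfold mmh; field_simp
      linarith
    · have hfl := Nat.lt_floor_add_one ((τ - a) / mmh a t n)
      rw [div_lt_iff₀ hh] at hfl
      unfold mmp mmK
      push_cast
      nlinarith
  · rintro ⟨k, hk, h1, h2⟩
    have ha : a ≤ mmp a t n k := by
      have h := mmp_mono hat (a := a) (t := t) n (Nat.zero_le k)
      rwa [mmp_zero] at h
    have hb : mmp a t n (k + 1) ≤ t := by
      have h := mmp_mono hat (a := a) (t := t) n (show k + 1 ≤ n from hk)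
      rwa [mmp_last hat hn] at h
    exact ⟨le_trans ha h1, lt_of_lt_of_le h2 hb⟩

private lemma mmF_measurable (α : ℝ) (G x : ℝ → ℝ) (n : ℕ) :
    Measurable (mmF α a t G x n) := by
  have hK : Measurable (mmK a t n) :=
    ((measurable_id.sub_const a).div_const _).nat_floor
  exact (measurable_from_nat
    (f := fun k : ℕ => (t - mmp a t n k) ^ (α - 1) * G (x (mmp a t n k)))).comp hK

private lemma mmF_integral (α : ℝ) (G x : ℝ → ℝ) (hat : a < t) {n : ℕ} (hn : 0 < n) :
    ∫ τ in Set.Ico a t, mmF α a t G x n τ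
      = ∑ k ∈ Finset.range n,
          mmh a t n * ((t - mmp a t n k) ^ (α - 1) * G (x (mmp a t n k))) := by
  have hEq : ∀ k : ℕ, ∀ τ ∈ Set.Ico (mmp a t n k) (mmp a t n (k + 1)),
      mmF α a t G x n τ = (t - mmp a t n k) ^ (α - 1) * G (x (mmp a t n k)) := by
    intro k τ hτ
    have hK := mmK_eq hat hn hτ.1 hτ.2
    unfold mmF mmq
    rw [hK]
  have hdisj : Set.Pairwise ↑(Finset.range n)
      (Function.onFun Disjoint fun k => Set.Ico (mmp a t n k) (mmp a t n (k + 1))) := by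
    have key : ∀ i j : ℕ, i < j →
        Disjoint (Set.Ico (mmp a t n i) (mmp a t n (i + 1)))
          (Set.Ico (mmp a t n j) (mmp a t n (j + 1))) := by
      intro i j hij
      apply Set.Ico_disjoint_Ico.mpr
      have h := mmp_mono hat (a := a) (t := t) n (show i + 1 ≤ j from hij)
      exact le_trans (min_le_left _ _) (le_trans h (le_max_right _ _))
    intro i _ j _ hij
    rcases lt_or_gt_of_ne hij with h | h
    · exact key i j h
    · exact (key j i h).symm
  have hvol : ∀ k : ℕ, volume (Set.Ico (mmp a t n k) (mmp a t n (k + 1)))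
      = ENNReal.ofReal (mmh a t n) := by
    intro k
    rw [Real.volume_Ico]
    congr 1
    unfold mmp; push_cast; ring
  have hintk : ∀ k ∈ Finset.range n,
      IntegrableOn (mmF α a t G x n) (Set.Ico (mmp a t n k) (mmp a t n (k + 1))) volume := by
    intro k _
    refine (integrableOn_const ?_).congr_fun
      (fun τ hτ => (hEq k τ hτ).symm) measurableSet_Ico
    rw [hvol k]; exact ENNReal.ofReal_ne_top
  rw [mmIco_cover hat hn, integral_biUnion_finset _ (fun i _ => measurableSet_Ico) hdisj hintk]
  refine Finset.sum_congr rfl fun k hk => ?_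
  rw [setIntegral_congr_fun measurableSet_Ico (hEq k), setIntegral_const, measureReal_def, hvol k,
    ENNReal.toReal_ofReal (mmh_nonneg hat n), smul_eq_mul]

end MMaux

open Filter

theorem memory_map_riemann_sum_limit (α a t : ℝ) (hα : 0 < α) (hat : a < t)
    (G : ℝ → ℝ) (hG : Continuous G) (x : ℝ → ℝ) (hx : ContinuousOn x (Set.Icc a t)) :
    Tendsto
      (fun n : ℕ =>
        (((t - a) / n) ^ α / Real.Gamma α) *
          ∑ k ∈ Finset.range n,
            ((n - k : ℕ) : ℝ) ^ (α - 1) * G (x (a + k * ((t - a) / n))))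
      atTop
      (nhds ((1 / Real.Gamma α) * ∫ τ in a..t, (t - τ) ^ (α - 1) * G (x τ))) := by
  have hΓ : 0 < Real.Gamma α := Real.Gamma_pos_of_pos hα
  have hta : (0:ℝ) < t - a := sub_pos.2 hat
  obtain ⟨C, hC⟩ : ∃ C, ∀ s ∈ Set.Icc a t, |G (x s)| ≤ C := by
    obtain ⟨C, hC⟩ := isCompact_Icc.exists_bound_of_continuousOn (hG.comp_continuousOn hx)
    exact ⟨C, fun s hs => by simpa [Real.norm_eq_abs] using hC s hs⟩
  have hC0 : 0 ≤ C := le_trans (abs_nonneg _) (hC a (Set.left_mem_Icc.2 hat.le))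
  set μ := volume.restrict (Set.Ioo a t) with hμdef
  set f : ℝ → ℝ := fun τ => (t - τ) ^ (α - 1) * G (x τ) with hfdef
  set bound : ℝ → ℝ := fun τ => C * ((t - τ) ^ (α - 1) + (t - a) ^ (α - 1)) with hbdef
  -- domination
  have hdom : ∀ n : ℕ, ∀ τ ∈ Set.Ioo a t, ‖mmF α a t G x n τ‖ ≤ bound τ := by
    intro n τ hτ
    have hq1 : a ≤ mmq a t n τ := mma_le_mmq hat n τ
    have hq2 : mmq a t n τ ≤ τ := mmq_le hat n hτ.1.le
    have htq : 0 < t - mmq a t n τ := by linarith [hτ.2]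
    have hrnn : 0 ≤ (t - mmq a t n τ) ^ (α - 1) := Real.rpow_nonneg htq.le _
    have hGb : |G (x (mmq a t n τ))| ≤ C := hC _ ⟨hq1, by linarith [hτ.2]⟩
    have hτt : (0:ℝ) < t - τ := by linarith [hτ.2]
    have hs1 : 0 ≤ (t - τ) ^ (α - 1) := Real.rpow_nonneg hτt.le _
    have hs2 : 0 ≤ (t - a) ^ (α - 1) := Real.rpow_nonneg hta.le _
    have hkey : (t - mmq a t n τ) ^ (α - 1) ≤ (t - τ) ^ (α - 1) + (t - a) ^ (α - 1) := by
      rcases le_or_gt 1 α with h1 | h1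
      · have hle : (t - mmq a t n τ) ^ (α - 1) ≤ (t - a) ^ (α - 1) :=
          Real.rpow_le_rpow htq.le (by linarith) (by linarith)
        linarith
      · have hle : (t - mmq a t n τ) ^ (α - 1) ≤ (t - τ) ^ (α - 1) :=
          Real.rpow_le_rpow_of_nonpos hτt (by linarith) (by linarith)
        linarith
    calc ‖mmF α a t G x n τ‖
        = (t - mmq a t n τ) ^ (α - 1) * |G (x (mmq a t n τ))| := by
          rw [Real.norm_eq_abs, mmF, abs_mul, abs_of_nonneg hrnn]
      _ ≤ ((t - τ) ^ (α - 1) + (t - a) ^ (α - 1)) * C :=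
          mul_le_mul hkey hGb (abs_nonneg _) (by linarith)
      _ = bound τ := by rw [hbdef]; ring
  -- integrable bound
  have hbint : Integrable bound μ := by
    have i1 : IntervalIntegrable (fun s : ℝ => s ^ (α - 1)) volume 0 (t - a) :=
      intervalIntegral.intervalIntegrable_rpow' (by linarith)
    have i2 : IntervalIntegrable (fun τ : ℝ => (t - τ) ^ (α - 1)) volume a t := by
      have h := (i1.comp_sub_left t).symm
      simpa using h
    have i3 : IntegrableOn (fun τ : ℝ => (t - τ) ^ (α - 1)) (Set.Ioo a t) := by
      exact ((intervalIntegrable_iff_integrableOn_Ioc_of_le hat.le).mp i2).mono_set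
        Set.Ioo_subset_Ioc_self
    have i4 : IntegrableOn (fun _ : ℝ => (t - a) ^ (α - 1)) (Set.Ioo a t) :=
      integrableOn_const measure_Ioo_lt_top.ne
    exact ((i3.add i4).const_mul C)
  -- pointwise limit
  have hlim : ∀ τ ∈ Set.Ioo a t, Tendsto (fun n => mmF α a t G x n τ) atTop (nhds (f τ)) := by
    intro τ hτ
    have hqt : Tendsto (fun n => mmq a t n τ) atTop (nhds τ) := by
      have hlow : ∀ n : ℕ, 1 ≤ n → τ - mmh a t n ≤ mmq a t n τ := by
        intro n hn
        have hh := mmh_pos hat hn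
        have hfl := Nat.lt_floor_add_one ((τ - a) / mmh a t n)
        rw [div_lt_iff₀ hh] at hfl
        unfold mmq mmp mmK
        nlinarith
      have h0 : Tendsto (fun n : ℕ => τ - mmh a t n) atTop (nhds τ) := by
        have h' : Tendsto (fun n : ℕ => τ - (t - a) / n) atTop (nhds (τ - 0)) :=
          Tendsto.sub tendsto_const_nhds (tendsto_const_div_atTop_nhds_zero_nat (t - a))
        simpa [mmh] using h'
      apply tendsto_of_tendsto_of_tendsto_of_le_of_le' h0 tendsto_const_nhds
      · filter_upwards [eventually_ge_atTop 1] with n hn using hlow n hn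
      · filter_upwards with n using mmq_le hat n hτ.1.le
    have hmem : ∀ n, mmq a t n τ ∈ Set.Icc a t := fun n =>
      ⟨mma_le_mmq hat n τ, le_trans (mmq_le hat n hτ.1.le) hτ.2.le⟩
    have hqt' : Tendsto (fun n => mmq a t n τ) atTop (nhdsWithin τ (Set.Icc a t)) :=
      tendsto_nhdsWithin_of_tendsto_nhds_of_eventually_within _ hqt
        (Eventually.of_forall hmem)
    have h1 : Tendsto (fun n => (t - mmq a t n τ) ^ (α - 1)) atTop
        (nhds ((t - τ) ^ (α - 1))) := by
      have hc : ContinuousAt (fun s : ℝ => s ^ (α - 1)) (t - τ) :=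
        Real.continuousAt_rpow_const _ _ (Or.inl (by linarith [hτ.2] : (0:ℝ) < t - τ).ne')
      exact hc.tendsto.comp (tendsto_const_nhds.sub hqt)
    have h2 : Tendsto (fun n => G (x (mmq a t n τ))) atTop (nhds (G (x τ))) :=
      (hG.tendsto _).comp ((hx τ ⟨hτ.1.le, hτ.2.le⟩).tendsto.comp hqt')
    exact h1.mul h2
  -- dominated convergence
  have key : Tendsto (fun n => ∫ τ, mmF α a t G x n τ ∂μ) atTop (nhds (∫ τ, f τ ∂μ)) := by
    apply tendsto_integral_of_dominated_convergence bound
    · exact fun n => ((mmF_measurable α G x n).aestronglyMeasurable)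
    · exact hbint
    · intro n
      rw [hμdef, ae_restrict_iff' measurableSet_Ioo]
      exact Eventually.of_forall (hdom n)
    · rw [hμdef, ae_restrict_iff' measurableSet_Ioo]
      exact Eventually.of_forall hlim
  -- sum identity
  have hsum : ∀ n : ℕ, 1 ≤ n →
      mmh a t n ^ α / Real.Gamma α *
          ∑ k ∈ Finset.range n, ((n - k : ℕ) : ℝ) ^ (α - 1) * G (x (a + k * mmh a t n))
        = (1 / Real.Gamma α) * ∫ τ, mmF α a t G x n τ ∂μ := by
    intro n hn
    have hh := mmh_pos hat hn
    have hint : ∫ τ, mmF α a t G x n τ ∂μ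
        = ∑ k ∈ Finset.range n,
            mmh a t n * ((t - mmp a t n k) ^ (α - 1) * G (x (mmp a t n k))) := by
      rw [hμdef, ← integral_Ico_eq_integral_Ioo]
      exact mmF_integral α G x hat hn
    rw [hint, Finset.mul_sum, Finset.mul_sum]
    refine Finset.sum_congr rfl fun k hk => ?_
    have hkn : k ≤ n := (Finset.mem_range.1 hk).le
    have hcast : ((n - k : ℕ) : ℝ) = (n : ℝ) - k := Nat.cast_sub hkn
    have htp : t - mmp a t n k = ((n - k : ℕ) : ℝ) * mmh a t n := by
      rw [hcast]
      have hn0 : (n : ℝ) ≠ 0 := by positivity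
      unfold mmp mmh; field_simp; ring
    have hhα : mmh a t n ^ α = mmh a t n * mmh a t n ^ (α - 1) := by
      have h := Real.rpow_add hh 1 (α - 1)
      rw [show (1:ℝ) + (α - 1) = α by ring, Real.rpow_one] at h
      exact h
    have hnk : (0:ℝ) ≤ ((n - k : ℕ) : ℝ) := Nat.cast_nonneg _
    rw [htp, Real.mul_rpow hnk hh.le, hhα]
    show mmh a t n * mmh a t n ^ (α - 1) / Real.Gamma α *
        (((n - k : ℕ) : ℝ) ^ (α - 1) * G (x (a + ↑k * mmh a t n)))
      = 1 / Real.Gamma α *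
        (mmh a t n * (((n - k : ℕ) : ℝ) ^ (α - 1) * mmh a t n ^ (α - 1) * G (x (mmp a t n k))))
    unfold mmp
    ring
  -- assemble
  have hfin : ∫ τ, f τ ∂μ = ∫ τ in a..t, (t - τ) ^ (α - 1) * G (x τ) := by
    rw [hμdef, intervalIntegral.integral_of_le hat.le, integral_Ioc_eq_integral_Ioo]
  have main := key.const_mul (1 / Real.Gamma α)
  rw [hfin] at main
  refine main.congr' ?_
  filter_upwards [eventually_ge_atTop 1] with n hn
  exact (hsum n hn).symm
end
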